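/- arXiv:1202.3587 — 2 statements merged into one kernel-verified Lean document; each statement's English description precedes it below -/
import Mathlib

section
/- Let A be a nonnegative m×n real matrix with m = n, and suppose column k of A contains exactly two nonzero entries a_{ik} and a_{jk} with i ≠ j. Let B be the (n-1)×(n-1) matrix obtained from A by replacing row i with a_{jk}·(row i) + a_{ik}·(row j), deleting row j, and deleting column k. Then per A = per B. -/
def permanent {n : ℕ} (A : Matrix (Fin n) (Fin n) ℝ) : ℝ :=
  ∑ σ : Equiv.Perm (Fin n), ∏ i, A i (σ i)

namespace PermanentContractionAux

open Finset

/-- Extend a permutation of `Fin n` to a permutation of `Fin (n+1)` sending `i` to `k`. -/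
def toBig {n : ℕ} (i k : Fin (n + 1)) (τ : Equiv.Perm (Fin n)) : Equiv.Perm (Fin (n + 1)) :=
  (finSuccEquiv' i).trans (τ.optionCongr.trans (finSuccEquiv' k).symm)

@[simp] lemma toBig_self {n : ℕ} (i k : Fin (n + 1)) (τ : Equiv.Perm (Fin n)) :
    toBig i k τ i = k := by simp [toBig]

@[simp] lemma toBig_succAbove {n : ℕ} (i k : Fin (n + 1)) (τ : Equiv.Perm (Fin n)) (p : Fin n) :
    toBig i k τ (i.succAbove p) = k.succAbove (τ p) := by simp [toBig]

/-- Permutations of `Fin n` are equivalent to permutations of `Fin (n+1)` sending `i` to `k`. -/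
def permEquiv {n : ℕ} (i k : Fin (n + 1)) :
    Equiv.Perm (Fin n) ≃ {σ : Equiv.Perm (Fin (n + 1)) // σ i = k} where
  toFun τ := ⟨toBig i k τ, toBig_self i k τ⟩
  invFun σ := Equiv.removeNone ((finSuccEquiv' i).symm.trans (σ.1.trans (finSuccEquiv' k)))
  left_inv τ := by
    show Equiv.removeNone ((finSuccEquiv' i).symm.trans ((toBig i k τ).trans (finSuccEquiv' k))) = τ
    have h : (finSuccEquiv' i).symm.trans ((toBig i k τ).trans (finSuccEquiv' k))
        = τ.optionCongr := by
      ext x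
      cases x with
      | none => simp [toBig]
      | some p => simp [toBig]
    rw [h, Equiv.removeNone_optionCongr]
  right_inv σ := by
    obtain ⟨σ, hσ⟩ := σ
    ext x
    simp only
    refine Fin.succAboveCases i ?_ (fun p => ?_) x
    · simp [hσ]
    · rw [toBig_succAbove]
      set e := (finSuccEquiv' i).symm.trans (σ.trans (finSuccEquiv' k)) with he
      have hne : σ (i.succAbove p) ≠ k := by
        rw [← hσ]
        exact fun h => Fin.succAbove_ne i p (σ.injective h)
      obtain ⟨q, hq⟩ := Fin.exists_succAbove_eq hne
      have hesome : e (some p) = some q := by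
        simp [he, ← hq]
      have := Equiv.removeNone_some e ⟨q, hesome⟩
      rw [hesome] at this
      have hrq : Equiv.removeNone e p = q := Option.some_injective _ this
      rw [hrq, hq]

/-- Laplace-type expansion of one "column class" of the permanent sum. -/
lemma sum_sigma_eq {n : ℕ} (f : Fin (n + 1) → Fin (n + 1) → ℝ) (i k : Fin (n + 1)) :
    ∑ σ ∈ Finset.univ.filter (fun σ : Equiv.Perm (Fin (n + 1)) => σ i = k), ∏ l, f l (σ l)
      = f i k * ∑ τ : Equiv.Perm (Fin n), ∏ p, f (i.succAbove p) (k.succAbove (τ p)) := by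
  rw [Finset.sum_subtype (p := fun σ : Equiv.Perm (Fin (n + 1)) => σ i = k)
    (Finset.univ.filter (fun σ : Equiv.Perm (Fin (n + 1)) => σ i = k))
    (fun σ => by simp) (fun σ => ∏ l, f l (σ l)), Finset.mul_sum]
  refine (Fintype.sum_equiv (permEquiv i k) _ _ fun τ => ?_).symm
  simp only [permEquiv, Equiv.coe_fn_mk]
  rw [Fin.prod_univ_succAbove (fun l => f l (toBig i k τ l)) i]
  simp

/-- Reindexing the rows by a permutation doesn't change the permanent-type sum. -/
lemma sum_reindex {n : ℕ} (f : Fin n → Fin n → ℝ) (π : Equiv.Perm (Fin n)) :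
    ∑ τ : Equiv.Perm (Fin n), ∏ p, f (π p) (τ p)
      = ∑ τ : Equiv.Perm (Fin n), ∏ p, f p (τ p) := by
  refine Fintype.sum_bijective (fun τ => τ * π⁻¹) (Group.mulRight_bijective π⁻¹) _ _ fun τ => ?_
  rw [← Equiv.prod_comp π (fun p => f p ((τ * π⁻¹) p))]
  simp [Equiv.Perm.mul_apply]

end PermanentContractionAux

theorem permanent_contraction (n : ℕ) (A : Matrix (Fin (n + 1)) (Fin (n + 1)) ℝ)
    (hA : ∀ p q, 0 ≤ A p q)
    (i j k : Fin (n + 1)) (hij : i ≠ j)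
    (hi : A i k ≠ 0) (hj : A j k ≠ 0)
    (hzero : ∀ l, l ≠ i → l ≠ j → A l k = 0) :
    permanent A =
      permanent
        ((A.updateRow i (A j k • A i + A i k • A j)).submatrix j.succAbove k.succAbove) := by
  classical
  open PermanentContractionAux Finset in
  obtain ⟨i', hi'⟩ := Fin.exists_succAbove_eq hij
  -- abbreviations
  set Ti := ∑ τ : Equiv.Perm (Fin n), ∏ p, A (i.succAbove p) (k.succAbove (τ p)) with hTi
  set Tj := ∑ τ : Equiv.Perm (Fin n), ∏ p, A (j.succAbove p) (k.succAbove (τ p)) with hTj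
  -- Left side: expand along column k
  have hL : permanent A = A i k * Ti + A j k * Tj := by
    unfold permanent
    rw [← Finset.sum_filter_add_sum_filter_not Finset.univ
      (fun σ : Equiv.Perm (Fin (n + 1)) => σ i = k)]
    have h2 : ∑ σ ∈ Finset.univ.filter (fun σ : Equiv.Perm (Fin (n + 1)) => ¬σ i = k),
        ∏ l, A l (σ l)
        = ∑ σ ∈ Finset.univ.filter (fun σ : Equiv.Perm (Fin (n + 1)) => σ j = k),
          ∏ l, A l (σ l) := by
      rw [← Finset.sum_filter_add_sum_filter_not
        (Finset.univ.filter (fun σ : Equiv.Perm (Fin (n + 1)) => ¬σ i = k))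
        (fun σ : Equiv.Perm (Fin (n + 1)) => σ j = k)]
      have hz : ∑ σ ∈ (Finset.univ.filter (fun σ : Equiv.Perm (Fin (n + 1)) => ¬σ i = k)).filter
          (fun σ => ¬σ j = k), ∏ l, A l (σ l) = 0 := by
        refine Finset.sum_eq_zero fun σ hσ => ?_
        simp only [Finset.mem_filter, Finset.mem_univ, true_and] at hσ
        refine Finset.prod_eq_zero (Finset.mem_univ (σ⁻¹ k)) ?_
        rw [show σ (σ⁻¹ k) = k from σ.apply_symm_apply k]
        refine hzero _ (fun h => hσ.1 ?_) (fun h => hσ.2 ?_)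
        · rw [← h, show σ (σ⁻¹ k) = k from σ.apply_symm_apply k]
        · rw [← h, show σ (σ⁻¹ k) = k from σ.apply_symm_apply k]
      rw [hz, add_zero, Finset.filter_filter]
      refine Finset.sum_congr ?_ fun _ _ => rfl
      refine Finset.filter_congr fun σ _ => ?_
      constructor
      · exact fun h => h.2
      · intro h
        refine ⟨fun h' => hij (σ.injective ?_), h⟩
        rw [h', h]
    rw [h2, sum_sigma_eq A i k, sum_sigma_eq A j k, ← hTi, ← hTj]
  -- Right side
  have hR : permanent
      ((A.updateRow i (A j k • A i + A i k • A j)).submatrix j.succAbove k.succAbove)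
      = A j k * Tj + A i k *
        ∑ τ : Equiv.Perm (Fin n), ∏ p, A (Equiv.swap i j (j.succAbove p)) (k.succAbove (τ p)) := by
    unfold permanent
    have hterm : ∀ τ : Equiv.Perm (Fin n),
        ∏ p, ((A.updateRow i (A j k • A i + A i k • A j)).submatrix j.succAbove k.succAbove)
          p (τ p)
        = A j k * ∏ p, A (j.succAbove p) (k.succAbove (τ p))
          + A i k * ∏ p, A (Equiv.swap i j (j.succAbove p)) (k.succAbove (τ p)) := by
      intro τ
      have hPeq : ∀ p ∈ Finset.univ.erase i',
          (A.updateRow i (A j k • A i + A i k • A j)) (j.succAbove p) (k.succAbove (τ p))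
            = A (j.succAbove p) (k.succAbove (τ p)) := by
        intro p hp
        have hpne : j.succAbove p ≠ i := by
          rw [← hi']
          exact fun h => (Finset.mem_erase.mp hp).1 (Fin.succAbove_right_injective h)
        rw [Matrix.updateRow_ne hpne]
      have hPeq2 : ∀ p ∈ Finset.univ.erase i',
          A (Equiv.swap i j (j.succAbove p)) (k.succAbove (τ p))
            = A (j.succAbove p) (k.succAbove (τ p)) := by
        intro p hp
        have hpne : j.succAbove p ≠ i := by
          rw [← hi']
          exact fun h => (Finset.mem_erase.mp hp).1 (Fin.succAbove_right_injective h)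
        rw [Equiv.swap_apply_of_ne_of_ne hpne (Fin.succAbove_ne j p)]
      simp only [Matrix.submatrix_apply]
      rw [← Finset.mul_prod_erase Finset.univ _ (Finset.mem_univ i'),
        ← Finset.mul_prod_erase Finset.univ
          (fun p => A (j.succAbove p) (k.succAbove (τ p))) (Finset.mem_univ i'),
        ← Finset.mul_prod_erase Finset.univ
          (fun p => A (Equiv.swap i j (j.succAbove p)) (k.succAbove (τ p))) (Finset.mem_univ i'),
        Finset.prod_congr rfl hPeq, Finset.prod_congr rfl hPeq2]
      rw [hi', Matrix.updateRow_self, Equiv.swap_apply_left]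
      simp only [Pi.add_apply, Pi.smul_apply, smul_eq_mul]
      ring
    simp only [hterm]
    rw [Finset.sum_add_distrib, ← Finset.mul_sum, ← Finset.mul_sum, ← hTj]
  -- the swapped rows are a permutation of the rows of A with row i removed
  have hr2inj : Function.Injective (fun p : Fin n => Equiv.swap i j (j.succAbove p)) :=
    (Equiv.injective _).comp Fin.succAbove_right_injective
  have hrange : Set.range (fun p : Fin n => Equiv.swap i j (j.succAbove p))
      = Set.range i.succAbove := by
    have : (fun p : Fin n => Equiv.swap i j (j.succAbove p))
        = (Equiv.swap i j) ∘ j.succAbove := rfl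
    rw [this, Set.range_comp, Fin.range_succAbove, Fin.range_succAbove,
      Equiv.image_compl, Set.image_singleton, Equiv.swap_apply_right]
  let π : Equiv.Perm (Fin n) :=
    (Equiv.ofInjective _ hr2inj).trans ((Equiv.setCongr hrange).trans
      (Equiv.ofInjective i.succAbove Fin.succAbove_right_injective).symm)
  have hπ : ∀ p, i.succAbove (π p) = Equiv.swap i j (j.succAbove p) := by
    intro p
    show i.succAbove ((Equiv.ofInjective i.succAbove Fin.succAbove_right_injective).symm
      ((Equiv.setCongr hrange) (Equiv.ofInjective _ hr2inj p))) = _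
    rw [Equiv.apply_ofInjective_symm Fin.succAbove_right_injective]
    simp
  have hTswap : ∑ τ : Equiv.Perm (Fin n), ∏ p, A (Equiv.swap i j (j.succAbove p))
      (k.succAbove (τ p)) = Ti := by
    have : ∀ τ : Equiv.Perm (Fin n), ∀ p,
        A (Equiv.swap i j (j.succAbove p)) (k.succAbove (τ p))
          = A (i.succAbove (π p)) (k.succAbove (τ p)) := fun τ p => by rw [hπ]
    calc ∑ τ : Equiv.Perm (Fin n), ∏ p, A (Equiv.swap i j (j.succAbove p)) (k.succAbove (τ p))
        = ∑ τ : Equiv.Perm (Fin n), ∏ p, A (i.succAbove (π p)) (k.succAbove (τ p)) := by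
          exact Finset.sum_congr rfl fun τ _ => Finset.prod_congr rfl fun p _ => this τ p
      _ = Ti := sum_reindex (fun p q => A (i.succAbove p) (k.succAbove q)) π
  rw [hL, hR, hTswap]
  ring
end

section
/- Let A_n be the n×n tridiagonal matrix over ℂ with main diagonal all 1, subdiagonal all -1, and superdiagonal all 2. Then the eigenvalues of A_n are 1 + 2√2 i cos(kπ/(n+1)) for k = 1, ..., n, and consequently J_{n+1} = Π_{k=1}^n (1 + 2√2 i cos(kπ/(n+1))), where J is the Jacobsthal sequence. -/
open Complex Real

open Polynomial

def jacobsthal : ℕ → ℤ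
  | 0 => 0
  | 1 => 1
  | n + 2 => jacobsthal (n + 1) + 2 * jacobsthal n

/-- Tridiagonal Toeplitz matrix over ℂ with diagonal 1, subdiagonal -1, superdiagonal 2. -/
def Amat (n : ℕ) : Matrix (Fin n) (Fin n) ℂ :=
  Matrix.of fun i j =>
    if (i : ℕ) = (j : ℕ) then 1
    else if (i : ℕ) = (j : ℕ) + 1 then -1
    else if (j : ℕ) = (i : ℕ) + 1 then 2
    else 0


noncomputable def Dp : ℕ → Polynomial ℂ
  | 0 => 1
  | 1 => Polynomial.X
  | n + 2 => Polynomial.X * Dp (n+1) + Polynomial.C 2 * Dp n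

lemma Dp_monic_deg : ∀ n, (Dp n).Monic ∧ (Dp n).natDegree = n
  | 0 => ⟨monic_one, natDegree_one⟩
  | 1 => ⟨monic_X, natDegree_X⟩
  | n+2 => by
    obtain ⟨h1, d1⟩ := Dp_monic_deg (n+1)
    obtain ⟨h0, d0⟩ := Dp_monic_deg n
    have hm : (Polynomial.X * Dp (n+1)).Monic := monic_X.mul h1
    have hd : (Polynomial.X * Dp (n+1)).natDegree = n + 2 := by
      rw [monic_X.natDegree_mul h1, natDegree_X, d1]
      omega
    have hlt : (Polynomial.C 2 * Dp n).degree < (Polynomial.X * Dp (n+1)).degree := by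
      calc (Polynomial.C 2 * Dp n).degree
          ≤ (Polynomial.C (2:ℂ)).degree + (Dp n).degree := degree_mul_le _ _
        _ ≤ 0 + (n : WithBot ℕ) := by
            gcongr
            · exact degree_C_le
            · rw [degree_eq_natDegree h0.ne_zero, d0]
        _ < ((n+2 : ℕ) : WithBot ℕ) := by
            rw [zero_add]
            exact_mod_cast (by omega : n < n + 2)
        _ = (Polynomial.X * Dp (n+1)).degree := by
            rw [degree_eq_natDegree hm.ne_zero, hd]
    have hmm : (Dp (n+2)).Monic := by
      show (Polynomial.X * Dp (n+1) + Polynomial.C 2 * Dp n).Monic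
      exact hm.add_of_left hlt
    refine ⟨hmm, ?_⟩
    show (Polynomial.X * Dp (n+1) + Polynomial.C 2 * Dp n).natDegree = n + 2
    rw [natDegree_eq_of_degree_eq (degree_add_eq_left_of_degree_lt hlt), hd]

lemma Dp_eval_cos : ∀ (n : ℕ) (θ : ℂ),
    (Dp n).eval (2 * (Real.sqrt 2 : ℂ) * Complex.I * Complex.cos θ) * Complex.sin θ
      = ((Real.sqrt 2 : ℂ) * Complex.I)^n * Complex.sin (((n : ℂ)+1) * θ)
  | 0, θ => by simp [Dp]
  | 1, θ => by
    have h2 : Complex.sin (2 * θ) = 2 * Complex.sin θ * Complex.cos θ := Complex.sin_two_mul θ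
    simp only [Dp, eval_X, pow_one, Nat.cast_one]
    rw [show ((1:ℂ)+1) = 2 by norm_num, h2]
    ring
  | n+2, θ => by
    have h1 := Dp_eval_cos (n+1) θ
    have h0 := Dp_eval_cos n θ
    have ha : ((Real.sqrt 2 : ℂ) * Complex.I)^2 = -2 := by
      rw [mul_pow, Complex.I_sq, ← Complex.ofReal_pow, Real.sq_sqrt (by norm_num : (0:ℝ) ≤ 2)]
      norm_num
    have key : Complex.sin (((n:ℂ)+3) * θ)
        = 2 * Complex.cos θ * Complex.sin (((n:ℂ)+2) * θ) - Complex.sin (((n:ℂ)+1) * θ) := by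
      have e1 : ((n:ℂ)+3)*θ = ((n:ℂ)+2)*θ + θ := by ring
      have e2 : ((n:ℂ)+1)*θ = ((n:ℂ)+2)*θ - θ := by ring
      rw [e1, e2, Complex.sin_add, Complex.sin_sub]
      ring
    have hpow : ((Real.sqrt 2 : ℂ) * Complex.I)^(n+2)
        = (-2) * ((Real.sqrt 2 : ℂ) * Complex.I)^n := by
      rw [pow_add, ha]; ring
    push_cast at h1 ⊢
    simp only [Dp, eval_add, eval_mul, eval_X, eval_C]
    rw [show ((n:ℂ)+2+1) = (n:ℂ)+3 by ring, key, hpow]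
    rw [show ((n:ℂ)+1+1) = (n:ℂ)+2 by ring] at h1
    linear_combination (2 * (Real.sqrt 2 : ℂ) * Complex.I * Complex.cos θ) * h1 + 2 * h0
      + (2 * Complex.cos θ * Complex.sin (((n:ℂ)+2) * θ) * ((Real.sqrt 2 : ℂ) * Complex.I)^n) * ha

noncomputable def ck (n k : ℕ) : ℂ :=
  2 * (Real.sqrt 2 : ℂ) * Complex.I * Complex.cos ((k:ℂ) * (Real.pi:ℂ) / ((n:ℂ)+1))

lemma Dp_root (n k : ℕ) (hk : k ∈ Finset.Icc 1 n) : (Dp n).eval (ck n k) = 0 := by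
  obtain ⟨hk1, hkn⟩ := Finset.mem_Icc.mp hk
  set θ : ℂ := (k:ℂ) * (Real.pi:ℂ) / ((n:ℂ)+1) with hθdef
  have h := Dp_eval_cos n θ
  have hn1 : ((n:ℂ)+1) ≠ 0 := Nat.cast_add_one_ne_zero n
  have hθ : ((n:ℂ)+1) * θ = (k:ℂ) * (Real.pi:ℂ) := by
    rw [hθdef]; field_simp
  have hs : Complex.sin (((n:ℂ)+1) * θ) = 0 := by
    rw [hθ]; exact Complex.sin_nat_mul_pi k
  have hreal : θ = (((k:ℝ) * Real.pi / ((n:ℝ)+1) : ℝ) : ℂ) := by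
    rw [hθdef]; push_cast; ring
  have hsin : Complex.sin θ ≠ 0 := by
    rw [hreal, ← Complex.ofReal_sin]
    simp only [ne_eq, Complex.ofReal_eq_zero]
    have hpos : 0 < (k:ℝ) * Real.pi / ((n:ℝ)+1) := by
      have : (0:ℝ) < k := by exact_mod_cast hk1
      have := Real.pi_pos
      positivity
    have hlt : (k:ℝ) * Real.pi / ((n:ℝ)+1) < Real.pi := by
      rw [div_lt_iff₀ (by positivity)]
      have hkr : (k:ℝ) < (n:ℝ)+1 := by exact_mod_cast Nat.lt_succ_of_le hkn
      nlinarith [Real.pi_pos]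
    exact ne_of_gt (Real.sin_pos_of_pos_of_lt_pi hpos hlt)
  rw [hs, mul_zero] at h
  rcases mul_eq_zero.mp h with h' | h'
  · exact h'
  · exact absurd h' hsin

lemma ck_injOn (n : ℕ) : Set.InjOn (ck n) (Finset.Icc 1 n : Finset ℕ) := by
  intro k hk l hl h
  simp only [Finset.coe_Icc, Set.mem_Icc] at hk hl
  have hne : (2 * (Real.sqrt 2 : ℂ) * Complex.I) ≠ 0 := by
    apply mul_ne_zero (mul_ne_zero two_ne_zero _) Complex.I_ne_zero
    simpa using Real.sqrt_ne_zero'.mpr (by norm_num : (0:ℝ) < 2)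
  have hcos := mul_left_cancel₀ hne h
  have hR : ∀ m : ℕ, ((m:ℂ) * (Real.pi:ℂ) / ((n:ℂ)+1)) = (((m:ℝ) * Real.pi / ((n:ℝ)+1) : ℝ) : ℂ) := by
    intro m; push_cast; ring
  rw [hR k, hR l, ← Complex.ofReal_cos, ← Complex.ofReal_cos] at hcos
  have hcosR : Real.cos ((k:ℝ) * Real.pi / ((n:ℝ)+1)) = Real.cos ((l:ℝ) * Real.pi / ((n:ℝ)+1)) :=
    Complex.ofReal_injective hcos
  have hmem : ∀ m : ℕ, m ≤ n → (m:ℝ) * Real.pi / ((n:ℝ)+1) ∈ Set.Icc 0 Real.pi := by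
    intro m hm
    constructor
    · positivity
    · rw [div_le_iff₀ (by positivity)]
      have : (m:ℝ) ≤ (n:ℝ)+1 := by exact_mod_cast Nat.le_succ_of_le hm
      nlinarith [Real.pi_pos]
  have := Real.injOn_cos (hmem k hk.2) (hmem l hl.2) hcosR
  field_simp at this
  exact_mod_cast (by linarith : (k:ℝ) = l)

lemma Dp_eq_prod (n : ℕ) :
    Dp n = ∏ k ∈ Finset.Icc 1 n, (Polynomial.X - Polynomial.C (ck n k)) := by
  obtain ⟨hm, hdeg⟩ := Dp_monic_deg n
  set P := ∏ k ∈ Finset.Icc 1 n, (Polynomial.X - Polynomial.C (ck n k)) with hP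
  have hPm : P.Monic := monic_prod_of_monic _ _ (fun k _ => monic_X_sub_C _)
  have hPdeg : P.natDegree = n := by
    rw [hP, natDegree_prod_of_monic _ _ (fun k _ => monic_X_sub_C _)]
    simp [natDegree_X_sub_C, Nat.card_Icc]
  have hsub : Dp n - P = 0 := by
    by_contra hq
    apply hq
    apply eq_zero_of_natDegree_lt_card_of_eval_eq_zero' _ ((Finset.Icc 1 n).image (ck n))
    · intro x hx
      obtain ⟨k, hk, rfl⟩ := Finset.mem_image.mp hx
      have hPz : P.eval (ck n k) = 0 := by
        rw [hP, eval_prod]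
        exact Finset.prod_eq_zero hk (by simp)
      rw [eval_sub, Dp_root n k hk, hPz, sub_zero]
    · rw [Finset.card_image_of_injOn (ck_injOn n), Nat.card_Icc]
      have hdlt : (Dp n - P).degree < (Dp n).degree := by
        apply degree_sub_lt
        · rw [degree_eq_natDegree hm.ne_zero, degree_eq_natDegree hPm.ne_zero, hdeg, hPdeg]
        · exact hm.ne_zero
        · rw [hm.leadingCoeff, hPm.leadingCoeff]
      rw [degree_eq_natDegree hm.ne_zero, hdeg] at hdlt
      have := (natDegree_lt_iff_degree_lt hq).mpr hdlt
      omega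
  exact sub_eq_zero.mp hsub

lemma prod_reflect {M : Type*} [CommMonoid M] (n : ℕ) (f : ℕ → M) :
    ∏ k ∈ Finset.Icc 1 n, f k = ∏ k ∈ Finset.Icc 1 n, f (n+1-k) := by
  refine Finset.prod_nbij' (fun k => n+1-k) (fun k => n+1-k) ?_ ?_ ?_ ?_ ?_ <;>
    intro a ha <;> simp only [Finset.mem_Icc] at * <;> first | omega | (congr 1; omega)

lemma ck_reflect (n k : ℕ) (hk : k ∈ Finset.Icc 1 n) : ck n (n+1-k) = -(ck n k) := by
  obtain ⟨h1, h2⟩ := Finset.mem_Icc.mp hk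
  unfold ck
  have hn1 : ((n:ℂ)+1) ≠ 0 := Nat.cast_add_one_ne_zero n
  have harg : ((n+1-k : ℕ) : ℂ) * (Real.pi:ℂ) / ((n:ℂ)+1)
      = (Real.pi:ℂ) - (k:ℂ) * (Real.pi:ℂ) / ((n:ℂ)+1) := by
    have hc : ((n+1-k:ℕ):ℂ) = (n:ℂ) + 1 - (k:ℂ) := by
      rw [Nat.cast_sub (by omega : k ≤ n+1)]; push_cast; ring
    rw [hc]; field_simp
  rw [harg, Complex.cos_pi_sub]; ring
def tri (x : ℂ) (n : ℕ) : Matrix (Fin n) (Fin n) ℂ :=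
  Matrix.of fun i j =>
    if (i : ℕ) = (j : ℕ) then x
    else if (i : ℕ) = (j : ℕ) + 1 then -1
    else if (j : ℕ) = (i : ℕ) + 1 then 2
    else 0

lemma tri_sub (x : ℂ) (n : ℕ) :
    (tri x (n+1)).submatrix Fin.succ Fin.succ = tri x n := by
  ext i j
  simp only [tri, Matrix.submatrix_apply, Matrix.of_apply, Fin.val_succ]
  split_ifs <;> first | rfl | omega

lemma succAbove_one_succ (n : ℕ) (i : Fin n) :
    (Fin.succ 0 : Fin (n+2)).succAbove i.succ = i.succ.succ := by
  rw [Fin.succAbove_of_le_castSucc]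
  rw [Fin.le_def, Fin.coe_castSucc, Fin.val_succ, Fin.val_succ, Fin.val_zero]
  omega

lemma succAbove_one_zero (n : ℕ) :
    (Fin.succ 0 : Fin (n+2)).succAbove 0 = 0 := by
  rw [Fin.succAbove_of_castSucc_lt]
  · rfl
  · rw [Fin.lt_def, Fin.coe_castSucc, Fin.val_succ, Fin.val_zero]
    omega

lemma tri_rec (x : ℂ) (n : ℕ) :
    (tri x (n+2)).det = x * (tri x (n+1)).det + 2 * (tri x n).det := by
  rw [Matrix.det_succ_column_zero, Fin.sum_univ_succ, Fin.sum_univ_succ]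
  have e0 : tri x (n+2) 0 0 = x := by simp [tri]
  have e1 : tri x (n+2) (Fin.succ 0) 0 = -1 := by
    have : ((Fin.succ 0 : Fin (n+2)) : ℕ) = 1 := by simp
    simp [tri, this]
  have ez : ∀ i : Fin n, tri x (n+2) i.succ.succ 0 = 0 := by
    intro i
    have : ((i.succ.succ : Fin (n+2)) : ℕ) = (i:ℕ) + 2 := by simp
    simp [tri, this]
  have hA : (tri x (n+2)).submatrix (Fin.succAbove 0) Fin.succ = tri x (n+1) := by
    rw [Fin.succAbove_zero]; exact tri_sub x (n+1)
  have hB : ((tri x (n+2)).submatrix (Fin.succ 0).succAbove Fin.succ).det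
      = 2 * (tri x n).det := by
    rw [Matrix.det_succ_row_zero, Fin.sum_univ_succ]
    have b0 : ((tri x (n+2)).submatrix (Fin.succ 0).succAbove Fin.succ) 0 0 = 2 := by
      simp [Matrix.submatrix_apply, succAbove_one_zero, tri]
    have bz : ∀ j : Fin n,
        ((tri x (n+2)).submatrix (Fin.succ 0).succAbove Fin.succ) 0 j.succ = 0 := by
      intro j
      have h1 : ((Fin.succ 0 : Fin (n+2)).succAbove 0 : ℕ) = 0 := by
        rw [succAbove_one_zero]; rfl
      have h2 : ((j.succ.succ : Fin (n+2)) : ℕ) = (j:ℕ) + 2 := by simp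
      simp [Matrix.submatrix_apply, tri, h1, h2]
    have bsub : (((tri x (n+2)).submatrix (Fin.succ 0).succAbove Fin.succ).submatrix
        Fin.succ (Fin.succAbove 0)) = tri x n := by
      rw [Fin.succAbove_zero]
      ext i j
      simp only [Matrix.submatrix_apply, succAbove_one_succ, tri, Matrix.of_apply, Fin.val_succ]
      split_ifs <;> first | rfl | omega
    simp only [b0, bz, bsub, zero_mul, mul_zero, Finset.sum_const_zero, add_zero]
    norm_num
  simp only [e0, e1, ez, zero_mul, mul_zero, Finset.sum_const_zero, add_zero, hA, hB,
    Fin.val_zero, Fin.val_succ]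
  ring

lemma det_tri : ∀ (n : ℕ) (x : ℂ), (tri x n).det = (Dp n).eval x
  | 0, x => by simp [Dp, tri, Matrix.det_fin_zero]
  | 1, x => by simp [Dp, Matrix.det_fin_one, tri]
  | n+2, x => by
    rw [tri_rec, det_tri (n+1) x, det_tri n x]
    simp [Dp]

lemma jac_eval : ∀ n : ℕ, ((jacobsthal (n+1) : ℤ) : ℂ) = (Dp n).eval 1
  | 0 => by simp [jacobsthal, Dp]
  | 1 => by norm_num [jacobsthal, Dp]
  | n+2 => by
    have h1 := jac_eval (n+1)
    have h0 := jac_eval n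
    show ((jacobsthal (n+3) : ℤ) : ℂ) = _
    rw [show jacobsthal (n+3) = jacobsthal (n+2) + 2 * jacobsthal (n+1) from rfl]
    push_cast
    simp only [Dp, eval_add, eval_mul, eval_X, eval_C, eval_one]
    rw [← h1, ← h0]
    push_cast
    ring

lemma scalar_sub_Amat (n : ℕ) (z : ℂ) :
    algebraMap ℂ (Matrix (Fin n) (Fin n) ℂ) z - Amat n = -(tri (1-z) n) := by
  ext i j
  rw [Matrix.sub_apply, Matrix.algebraMap_matrix_apply, Matrix.neg_apply]
  simp only [tri, Amat, Matrix.of_apply, Algebra.algebraMap_self_apply]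
  by_cases h : (i:ℕ) = (j:ℕ)
  · rw [if_pos (Fin.ext h), if_pos h, if_pos h]; ring
  · rw [if_neg (fun hh => h (congrArg Fin.val hh)), if_neg h, if_neg h]
    by_cases h2 : (i:ℕ) = (j:ℕ)+1
    · rw [if_pos h2]; norm_num
    · rw [if_neg h2]
      by_cases h3 : (j:ℕ) = (i:ℕ)+1
      · rw [if_pos h3]; norm_num
      · rw [if_neg h3]; norm_num

lemma mem_spectrum_iff_eval (n : ℕ) (z : ℂ) :
    z ∈ spectrum ℂ (Amat n) ↔ (Dp n).eval (1-z) = 0 := by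
  rw [spectrum.mem_iff, Matrix.isUnit_iff_isUnit_det, isUnit_iff_ne_zero, not_not,
      scalar_sub_Amat, Matrix.det_neg, det_tri]
  constructor
  · intro h
    rcases mul_eq_zero.mp h with h' | h'
    · exact absurd h' (pow_ne_zero _ (by norm_num))
    · exact h'
  · intro h; rw [h, mul_zero]

theorem eigenvalues_Amat_and_jacobsthal_factorization (n : ℕ) :
    spectrum ℂ (Amat n) =
      {z : ℂ | ∃ k ∈ Finset.Icc 1 n,
        z = 1 + 2 * Real.sqrt 2 * Complex.I * Complex.cos (k * Real.pi / (n + 1))} ∧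
    (jacobsthal (n + 1) : ℂ) =
      ∏ k ∈ Finset.Icc 1 n,
        (1 + 2 * Real.sqrt 2 * Complex.I * Complex.cos (k * Real.pi / (n + 1))) := by
  have hck : ∀ k : ℕ, (1 : ℂ) + 2 * Real.sqrt 2 * Complex.I * Complex.cos (k * Real.pi / (n + 1))
      = 1 + ck n k := by
    intro k; rfl
  constructor
  · ext z
    simp only [Set.mem_setOf_eq, hck]
    rw [mem_spectrum_iff_eval, Dp_eq_prod, eval_prod]
    simp only [eval_sub, eval_X, eval_C]
    rw [Finset.prod_eq_zero_iff]
    constructor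
    · rintro ⟨k, hk, hzk⟩
      obtain ⟨hk1, hk2⟩ := Finset.mem_Icc.mp hk
      refine ⟨n+1-k, Finset.mem_Icc.mpr (by omega), ?_⟩
      rw [ck_reflect n k hk]
      linear_combination -hzk
    · rintro ⟨k, hk, rfl⟩
      obtain ⟨hk1, hk2⟩ := Finset.mem_Icc.mp hk
      refine ⟨n+1-k, Finset.mem_Icc.mpr (by omega), ?_⟩
      rw [ck_reflect n k hk]
      ring
  · simp only [hck]
    calc (jacobsthal (n+1) : ℂ) = (Dp n).eval 1 := jac_eval n
      _ = ∏ k ∈ Finset.Icc 1 n, (1 - ck n k) := by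
          rw [Dp_eq_prod, eval_prod]; simp only [eval_sub, eval_X, eval_C]
      _ = ∏ k ∈ Finset.Icc 1 n, (1 - ck n (n+1-k)) := prod_reflect n (fun k => 1 - ck n k)
      _ = ∏ k ∈ Finset.Icc 1 n, (1 + ck n k) := by
          refine Finset.prod_congr rfl (fun k hk => ?_)
          rw [ck_reflect n k hk]; ring
end
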